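/- Let n ≥ 2 be an integer, define μ_n^−(ρ) = −1 − (n·ρ^{(n−1)²}·(1 − (1 − 1/n)·ρ^{2n−1}))/(2n−1), and let ν_n* be the unique zero of μ_n^− in [1, +∞). Then 1 + (ln n)/n² − (ln(ln n))/n² < ν_n*. -/

import Mathlib

/-- The function `μ_n^−` from the analysis of the optimal third order SSP
Runge–Kutta methods with `n²` stages. -/
noncomputable def munMinus (n : ℕ) (ρ : ℝ) : ℝ :=
  -1 - (n * ρ ^ ((n - 1) ^ 2) * (1 - (1 - 1 / (n : ℝ)) * ρ ^ (2 * n - 1))) / (2 * (n : ℝ) - 1)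

private lemma aux_bound (a b c : ℕ) (hab : a + b = c) (ν N L t : ℝ)
    (hN2 : 2 ≤ N) (hbR : (b : ℝ) = 2 * N - 1) (hcR : (c : ℝ) = N ^ 2)
    (hLpos : 0 < L) (htpos : 0 < t) (hexpt : Real.exp t = N / L)
    (hfin : t * (2 * N - 1) - N < (2 * N - 1) * L)
    (hν1 : 1 ≤ ν) (hx : ν ≤ 1 + t / N ^ 2)
    (heq : (N - 1) * ν ^ c - N * ν ^ a = 2 * N - 1) : False := by
  have hN0 : (0 : ℝ) < N := by linarith
  have hN2pos : (0 : ℝ) < N ^ 2 := by positivity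
  have hν0' : (0 : ℝ) < ν := by linarith
  have hpowk : ∀ k : ℕ, ν ^ k ≤ Real.exp (t * k / N ^ 2) := by
    intro k
    have e1 : ν ^ k ≤ (1 + t / N ^ 2) ^ k := pow_le_pow_left₀ (le_of_lt hν0') hx k
    have e2 : (1 + t / N ^ 2) ^ k ≤ (Real.exp (t / N ^ 2)) ^ k := by
      apply pow_le_pow_left₀ (by positivity)
      linarith [Real.add_one_le_exp (t / N ^ 2)]
    have e3 : (Real.exp (t / N ^ 2)) ^ k = Real.exp (t * k / N ^ 2) := by
      rw [← Real.exp_nat_mul]; ring_nf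
    linarith [e3 ▸ e2]
  -- upper bound for ν ^ c
  have hmain : ν ^ c ≤ N / L := by
    have h1 := hpowk c
    rw [hcR] at h1
    have h2 : t * N ^ 2 / N ^ 2 = t := by field_simp
    rw [h2, hexpt] at h1
    exact h1
  -- lower bound for (ν ^ b)⁻¹
  have hbpos : (0 : ℝ) < ν ^ b := pow_pos hν0' _
  have hinv : 1 - t * (2 * N - 1) / N ^ 2 ≤ (ν ^ b)⁻¹ := by
    have h1 := hpowk b
    rw [hbR] at h1
    have h2 : (Real.exp (t * (2 * N - 1) / N ^ 2))⁻¹ ≤ (ν ^ b)⁻¹ :=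
      inv_anti₀ hbpos h1
    rw [← Real.exp_neg] at h2
    have h4 := Real.add_one_le_exp (-(t * (2 * N - 1) / N ^ 2))
    linarith
  -- rewrite ν ^ a
  have hbne : ν ^ b ≠ 0 := ne_of_gt hbpos
  have ha : ν ^ a = ν ^ c * (ν ^ b)⁻¹ := by
    rw [← hab, pow_add]
    field_simp
  have hcpos : (0 : ℝ) < ν ^ c := pow_pos hν0' _
  -- main chain
  have hstep : 2 * N - 1 ≤ ν ^ c * (t * (2 * N - 1) / N - 1) := by
    have h1 : N * ν ^ c * (1 - t * (2 * N - 1) / N ^ 2) ≤ N * ν ^ a := by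
      rw [ha]
      have h2 : (N * ν ^ c) * (1 - t * (2 * N - 1) / N ^ 2) ≤ (N * ν ^ c) * (ν ^ b)⁻¹ :=
        mul_le_mul_of_nonneg_left hinv (le_of_lt (mul_pos hN0 hcpos))
      nlinarith [h2]
    have h3 : (N - 1) * ν ^ c - N * ν ^ c * (1 - t * (2 * N - 1) / N ^ 2)
        = ν ^ c * (t * (2 * N - 1) / N - 1) := by
      field_simp; ring
    linarith
  rcases le_or_gt (t * (2 * N - 1) / N - 1) 0 with hs | hs
  · nlinarith [mul_nonpos_of_nonneg_of_nonpos (le_of_lt hcpos) hs]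
  · have h1 : ν ^ c * (t * (2 * N - 1) / N - 1) ≤ (N / L) * (t * (2 * N - 1) / N - 1) :=
      mul_le_mul_of_nonneg_right hmain (le_of_lt hs)
    have h2 : 2 * N - 1 ≤ (N / L) * (t * (2 * N - 1) / N - 1) := le_trans hstep h1
    have h4 : (2 * N - 1) * L ≤ (N / L) * (t * (2 * N - 1) / N - 1) * L :=
      mul_le_mul_of_nonneg_right h2 (le_of_lt hLpos)
    have h5 : (N / L) * (t * (2 * N - 1) / N - 1) * L = t * (2 * N - 1) - N := by
      field_simp
    rw [h5] at h4
    linarith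

/-- **Lemma 3.13 (lower bound).** For `n ≥ 2`, the unique zero `ν_n*` of `μ_n^−` in
`[1, ∞)` satisfies `1 + (ln n)/n² − ln(ln n)/n² < ν_n*`. -/
theorem nunstar_lower_bound (n : ℕ) (hn : 2 ≤ n)
    (ν : ℝ) (hν1 : 1 ≤ ν) (hν0 : munMinus n ν = 0)
    (huniq : ∀ ρ : ℝ, 1 ≤ ρ → munMinus n ρ = 0 → ρ = ν) :
    1 + Real.log n / (n : ℝ) ^ 2 - Real.log (Real.log n) / (n : ℝ) ^ 2 < ν := by
  obtain ⟨m, hm⟩ : ∃ m, n = m + 2 := ⟨n - 2, by omega⟩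
  have hN2 : (2:ℝ) ≤ (n : ℝ) := by exact_mod_cast hn
  have hN0 : (0:ℝ) < (n : ℝ) := by linarith
  have hNne : (n : ℝ) ≠ 0 := ne_of_gt hN0
  have hden : (0:ℝ) < 2 * (n : ℝ) - 1 := by linarith
  have hdne : (2 * (n : ℝ) - 1) ≠ 0 := ne_of_gt hden
  -- exponent identities
  have hab : (n - 1) ^ 2 + (2 * n - 1) = n ^ 2 := by
    subst hm
    rw [show m + 2 - 1 = m + 1 from rfl, show 2 * (m + 2) - 1 = 2 * m + 3 from by omega]
    ring
  have hbR : ((2 * n - 1 : ℕ) : ℝ) = 2 * (n : ℝ) - 1 := by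
    subst hm
    rw [show 2 * (m + 2) - 1 = 2 * m + 3 from by omega]
    push_cast; ring
  have hcR : ((n ^ 2 : ℕ) : ℝ) = (n : ℝ) ^ 2 := by push_cast; ring
  -- log facts
  have hlog2 : Real.log 2 ≤ Real.log n := Real.log_le_log (by norm_num) hN2
  have hlog2pos : 0 < Real.log 2 := Real.log_pos (by norm_num)
  have hLpos : 0 < Real.log n := lt_of_lt_of_le hlog2pos hlog2
  have hLLhalf : -(1/2 : ℝ) < Real.log (Real.log n) := by
    have h2 : Real.exp (-(1/2:ℝ)) < 2/3 := by
      rw [Real.exp_neg, inv_lt_comm₀ (Real.exp_pos _) (by norm_num)]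
      have := Real.add_one_lt_exp (show (1/2 : ℝ) ≠ 0 by norm_num)
      norm_num
      linarith
    have h1 : Real.exp (-(1/2 : ℝ)) < Real.log 2 := by
      linarith [Real.log_two_gt_d9]
    calc -(1/2:ℝ) = Real.log (Real.exp (-(1/2:ℝ))) := (Real.log_exp _).symm
      _ < Real.log (Real.log 2) := Real.log_lt_log (Real.exp_pos _) h1
      _ ≤ Real.log (Real.log n) := Real.log_le_log hlog2pos hlog2
  have hLLlt : Real.log (Real.log n) < Real.log n :=
    lt_of_le_of_lt (Real.log_le_sub_one_of_pos hLpos) (by linarith)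
  set t : ℝ := Real.log n - Real.log (Real.log n) with htdef
  have htpos : 0 < t := by simp only [htdef]; linarith
  have hexpt : Real.exp t = (n : ℝ) / Real.log n := by
    rw [htdef, Real.exp_sub, Real.exp_log hN0, Real.exp_log hLpos]
  have hfin : t * (2 * (n : ℝ) - 1) - (n : ℝ) < (2 * (n : ℝ) - 1) * Real.log n := by
    rw [htdef]
    nlinarith [mul_pos (show (0:ℝ) < 1/2 + Real.log (Real.log n) by linarith) hden]
  -- the equation from μ(ν) = 0
  have h := hν0
  unfold munMinus at h
  have hX : (n : ℝ) * ν ^ ((n - 1) ^ 2) * (1 - (1 - 1 / (n : ℝ)) * ν ^ (2 * n - 1))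
      = -(2 * (n : ℝ) - 1) := by
    have h2 : ((n : ℝ) * ν ^ ((n - 1) ^ 2) * (1 - (1 - 1 / (n : ℝ)) * ν ^ (2 * n - 1)))
        / (2 * (n : ℝ) - 1) = -1 := by linarith
    have h3 := (div_eq_iff hdne).mp h2
    linarith
  have hN1 : (n : ℝ) * (1 - 1 / (n : ℝ)) = (n : ℝ) - 1 := by field_simp
  have hexp : ν ^ ((n - 1) ^ 2) * ν ^ (2 * n - 1) = ν ^ (n ^ 2) := by
    rw [← pow_add, hab]
  have hX2 : (n : ℝ) * ν ^ ((n - 1) ^ 2)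
      - ((n : ℝ) - 1) * (ν ^ ((n - 1) ^ 2) * ν ^ (2 * n - 1)) = -(2 * (n : ℝ) - 1) := by
    linear_combination hX + ν ^ ((n - 1) ^ 2) * ν ^ (2 * n - 1) * hN1
  have heq : ((n : ℝ) - 1) * ν ^ (n ^ 2) - (n : ℝ) * ν ^ ((n - 1) ^ 2) = 2 * (n : ℝ) - 1 := by
    linear_combination -hX2 - ((n : ℝ) - 1) * hexp
  -- conclude by contradiction
  by_contra hcon
  push_neg at hcon
  have hx : ν ≤ 1 + t / (n : ℝ) ^ 2 := by
    rw [htdef]; ring_nf; ring_nf at hcon; linarith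
  exact aux_bound ((n - 1) ^ 2) (2 * n - 1) (n ^ 2) hab ν (n : ℝ) (Real.log n) t
    hN2 hbR hcR hLpos htpos hexpt hfin hν1 hx heq
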